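/- Let Y be a set carrying two metrics d₁ and d₂ such that both (Y, d₁) and (Y, d₂) are compact geodesic metric spaces, let M > 0, and let d_ℓ¹ and d_ℓ² be the induced length metrics on X_M = Y × (0, M] built from the Balogh–Schramm distances ρ₁ and ρ₂ of d₁ and d₂ respectively. Then d_ℓ¹ and d_ℓ² are rough-isometric (there exists c ≥ 0 with |d_ℓ¹(x,y) − d_ℓ²(x,y)| ≤ c for all x, y) if and only if d₁ and d₂ are bi-Lipschitzly equivalent (there exists K ≥ 1 with (1/K)·d₁(p,q) ≤ d₂(p,q) ≤ K·d₁(p,q) for all p, q ∈ Y). -/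

import Mathlib

open Set

/-- The Balogh–Schramm distance on `Y × (0, ∞)`:
`ρ((p,s),(q,t)) = 2·log((d_Y(p,q) + max(s,t))/√(s·t))`. -/
noncomputable def BS {Y : Type*} [MetricSpace Y] (x y : Y × ℝ) : ℝ :=
  2 * Real.log ((dist x.1 y.1 + max x.2 y.2) / Real.sqrt (x.2 * y.2))

/-- Length of the map `γ` over the set `S` with respect to the distance
function `d`: the supremum over finite monotone partitions in `S` of the sums
of consecutive distances (as in Mathlib's `eVariationOn`). -/
noncomputable def lengthOn {X : Type*} (d : X → X → ℝ) (γ : ℝ → X) (S : Set ℝ) : ENNReal :=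
  ⨆ p : ℕ × { u : ℕ → ℝ // Monotone u ∧ ∀ i, u i ∈ S },
    ∑ i ∈ Finset.range p.1, ENNReal.ofReal (d (γ (p.2.1 i)) (γ (p.2.1 (i + 1))))

/-- Membership in `X_M = Y × (0, M]`. -/
def inXM {Y : Type*} (M : ℝ) (x : Y × ℝ) : Prop := 0 < x.2 ∧ x.2 ≤ M

/-- The induced length metric on `X_M = Y × (0, M]`: the infimum of
Balogh–Schramm lengths of continuous paths joining `x` and `y` inside `X_M`. -/
noncomputable def dLen {Y : Type*} [MetricSpace Y] (M : ℝ) (x y : Y × ℝ) : ℝ :=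
  (sInf {L : ENNReal | ∃ (a b : ℝ) (γ : ℝ → Y × ℝ), a ≤ b ∧
      ContinuousOn γ (Icc a b) ∧ γ a = x ∧ γ b = y ∧
      (∀ t ∈ Icc a b, inXM M (γ t)) ∧
      lengthOn (BS (Y := Y)) γ (Icc a b) = L}).toReal

/-- A metric space is geodesic: any two points are joined by an isometric
embedding of `[0, dist p q]`. -/
def GeodesicSpace (Y : Type*) [MetricSpace Y] : Prop :=
  ∀ p q : Y, ∃ α : ℝ → Y, α 0 = p ∧ α (dist p q) = q ∧
    ∀ s ∈ Icc (0:ℝ) (dist p q), ∀ t ∈ Icc (0:ℝ) (dist p q), dist (α s) (α t) = |s - t|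



-- BS nonneg
lemma BS_nonneg {Y : Type*} [MetricSpace Y] {x y : Y × ℝ} (hx : 0 < x.2) (hy : 0 < y.2) :
    0 ≤ BS x y := by
  have hs : Real.sqrt (x.2 * y.2) ≤ max x.2 y.2 := by
    rw [show max x.2 y.2 = Real.sqrt ((max x.2 y.2) * (max x.2 y.2)) by
      rw [Real.sqrt_mul_self (le_max_of_le_left hx.le)]]
    apply Real.sqrt_le_sqrt
    apply mul_le_mul (le_max_left _ _) (le_max_right _ _) hy.le (le_max_of_le_left hx.le)
  have hpos : 0 < Real.sqrt (x.2 * y.2) := Real.sqrt_pos.2 (mul_pos hx hy)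
  have h1 : (1:ℝ) ≤ (dist x.1 y.1 + max x.2 y.2) / Real.sqrt (x.2 * y.2) := by
    rw [le_div_iff₀ hpos]
    nlinarith [dist_nonneg (x := x.1) (y := y.1)]
  have := Real.log_nonneg h1
  unfold BS; linarith

lemma key_ineq {d12 d23 d13 s1 s2 s3 : ℝ} (h1 : 0 < s1) (h2 : 0 < s2) (h3 : 0 < s3)
    (hd12 : 0 ≤ d12) (hd23 : 0 ≤ d23) (htri : d13 ≤ d12 + d23) :
    (d13 + max s1 s3) * s2 ≤ (d12 + max s1 s2) * (d23 + max s2 s3) := by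
  rcases le_total s1 s2 with a1 | a1 <;> rcases le_total s2 s3 with a2 | a2 <;>
    rcases le_total s1 s3 with a3 | a3 <;>
    simp only [max_eq_left, max_eq_right, a1, a2, a3] <;>
    nlinarith [mul_nonneg hd12 hd23, mul_nonneg hd12 h2.le, mul_nonneg hd23 h2.le,
      mul_nonneg hd12 h3.le, mul_nonneg hd23 h1.le, mul_nonneg hd12 h1.le,
      mul_nonneg hd23 h3.le, mul_pos h2 h2, mul_pos h1 h3, mul_pos h2 h3, mul_pos h1 h2]

lemma one_le_ratio {Y : Type*} [MetricSpace Y] (x y : Y × ℝ) (hx : 0 < x.2) (hy : 0 < y.2) :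
    (1:ℝ) ≤ (dist x.1 y.1 + max x.2 y.2) / Real.sqrt (x.2 * y.2) := by
  have hs : Real.sqrt (x.2 * y.2) ≤ max x.2 y.2 := by
    rw [show max x.2 y.2 = Real.sqrt ((max x.2 y.2) * (max x.2 y.2)) by
      rw [Real.sqrt_mul_self (le_max_of_le_left hx.le)]]
    exact Real.sqrt_le_sqrt
      (mul_le_mul (le_max_left _ _) (le_max_right _ _) hy.le (le_max_of_le_left hx.le))
  have hpos : 0 < Real.sqrt (x.2 * y.2) := Real.sqrt_pos.2 (mul_pos hx hy)
  rw [le_div_iff₀ hpos]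
  nlinarith [dist_nonneg (x := x.1) (y := y.1)]

lemma BS_triangle {Y : Type*} [MetricSpace Y] {x y z : Y × ℝ}
    (hx : 0 < x.2) (hy : 0 < y.2) (hz : 0 < z.2) : BS x z ≤ BS x y + BS y z := by
  have hxy := one_le_ratio x y hx hy
  have hyz := one_le_ratio y z hy hz
  have hsx : (0:ℝ) < Real.sqrt (x.2 * z.2) := Real.sqrt_pos.2 (mul_pos hx hz)
  have key : (dist x.1 z.1 + max x.2 z.2) / Real.sqrt (x.2 * z.2) ≤
      ((dist x.1 y.1 + max x.2 y.2) / Real.sqrt (x.2 * y.2)) *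
      ((dist y.1 z.1 + max y.2 z.2) / Real.sqrt (y.2 * z.2)) := by
    rw [div_mul_div_comm]
    have hden : Real.sqrt (x.2 * y.2) * Real.sqrt (y.2 * z.2) = y.2 * Real.sqrt (x.2 * z.2) := by
      rw [← Real.sqrt_mul (by positivity), show x.2 * y.2 * (y.2 * z.2) = y.2^2 * (x.2*z.2) by ring,
        Real.sqrt_mul (by positivity), Real.sqrt_sq hy.le]
    rw [hden, div_le_div_iff₀ hsx (by positivity)]
    have := key_ineq hx hy hz (dist_nonneg (x := x.1) (y := y.1))
      (dist_nonneg (x := y.1) (y := z.1)) (dist_triangle x.1 y.1 z.1)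
    nlinarith [mul_le_mul_of_nonneg_right this hsx.le]
  unfold BS
  rw [← mul_add]
  have h2 : (0:ℝ) < (dist x.1 y.1 + max x.2 y.2) / Real.sqrt (x.2 * y.2) := lt_of_lt_of_le one_pos hxy
  rw [← Real.log_mul (ne_of_gt h2) (ne_of_gt (lt_of_lt_of_le one_pos hyz))]
  have := Real.log_le_log (lt_of_lt_of_le one_pos (one_le_ratio x z hx hz)) key
  linarith

lemma lengthOn_le {X : Type*} (d : X → X → ℝ) (γ : ℝ → X) {a b : ℝ} (hab : a ≤ b)
    (f : ℝ → ℝ) (hf : MonotoneOn f (Icc a b))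
    (hd : ∀ u ∈ Icc a b, ∀ v ∈ Icc a b, u ≤ v → d (γ u) (γ v) ≤ f v - f u) :
    lengthOn d γ (Icc a b) ≤ ENNReal.ofReal (f b - f a) := by
  apply iSup_le
  rintro ⟨n, u, hu, hmem⟩
  calc ∑ i ∈ Finset.range n, ENNReal.ofReal (d (γ (u i)) (γ (u (i+1))))
      ≤ ∑ i ∈ Finset.range n, ENNReal.ofReal (f (u (i+1)) - f (u i)) := by
        apply Finset.sum_le_sum
        intro i _
        exact ENNReal.ofReal_le_ofReal (hd _ (hmem i) _ (hmem (i+1)) (hu (Nat.le_succ i)))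
    _ = ENNReal.ofReal (∑ i ∈ Finset.range n, (f (u (i+1)) - f (u i))) := by
        rw [ENNReal.ofReal_sum_of_nonneg]
        intro i _
        have := hf (hmem i) (hmem (i+1)) (hu (Nat.le_succ i))
        linarith
    _ = ENNReal.ofReal (f (u n) - f (u 0)) := by
        rw [Finset.sum_range_sub (fun i => f (u i))]
    _ ≤ ENNReal.ofReal (f b - f a) := by
        apply ENNReal.ofReal_le_ofReal
        have h1 := hf (hmem n) (right_mem_Icc.2 hab) (hmem n).2
        have h2 := hf (left_mem_Icc.2 hab) (hmem 0) (hmem 0).1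
        linarith

lemma lengthOn_ge {X : Type*} (d : X → X → ℝ) (γ : ℝ → X) {a b : ℝ} (hab : a ≤ b) :
    ENNReal.ofReal (d (γ a) (γ b)) ≤ lengthOn d γ (Icc a b) := by
  have hmono : Monotone (fun i : ℕ => if i = 0 then a else b) := by
    intro i j hij
    dsimp only
    split <;> split <;> first | rfl | omega | exact hab | (exfalso; omega)
  have := le_iSup (fun p : ℕ × { u : ℕ → ℝ // Monotone u ∧ ∀ i, u i ∈ Icc a b } =>
    ∑ i ∈ Finset.range p.1, ENNReal.ofReal (d (γ (p.2.1 i)) (γ (p.2.1 (i + 1)))))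
    ⟨1, ⟨fun i => if i = 0 then a else b, hmono, fun i => by
      dsimp only; split
      · exact left_mem_Icc.2 hab
      · exact right_mem_Icc.2 hab⟩⟩
  simp at this
  exact this

lemma BS_same_base {Y : Type*} [MetricSpace Y] (w : Y) {a b : ℝ} (ha : 0 < a) (hb : 0 < b) :
    BS (w, a) (w, b) = |Real.log a - Real.log b| := by
  have hsq : Real.sqrt (a * b) ≠ 0 := ne_of_gt (Real.sqrt_pos.2 (mul_pos ha hb))
  unfold BS
  simp only [dist_self, zero_add]
  rw [Real.log_div (by positivity) hsq, Real.log_sqrt (by positivity),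
    Real.log_mul ha.ne' hb.ne']
  rcases le_total a b with h | h
  · rw [max_eq_right h, abs_of_nonpos (by have := Real.log_le_log ha h; linarith)]
    ring
  · rw [max_eq_left h, abs_of_nonneg (by have := Real.log_le_log hb h; linarith)]
    ring

lemma BS_same_height {Y : Type*} [MetricSpace Y] (w1 w2 : Y) {h : ℝ} (hh : 0 < h) :
    BS (w1, h) (w2, h) ≤ 2 * (dist w1 w2 / h) := by
  unfold BS
  simp only [max_self]
  rw [Real.sqrt_mul_self hh.le]
  have h1 : (0:ℝ) < (dist w1 w2 + h) / h := by positivity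
  have := Real.log_le_sub_one_of_pos h1
  have h2 : (dist w1 w2 + h) / h - 1 = dist w1 w2 / h := by field_simp; ring
  nlinarith [this]

set_option maxHeartbeats 2000000 in
lemma upper_path {Y : Type*} [MetricSpace Y] (hg : GeodesicSpace Y) {M D : ℝ} (hM : 0 < M)
    (hD : ∀ p q : Y, dist p q ≤ D) (x y : Y × ℝ) (hx : inXM M x) (hy : inXM M y) :
    ∃ (a b : ℝ) (γ : ℝ → Y × ℝ), a ≤ b ∧ ContinuousOn γ (Icc a b) ∧ γ a = x ∧ γ b = y ∧
      (∀ t ∈ Icc a b, inXM M (γ t)) ∧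
      lengthOn (BS (Y := Y)) γ (Icc a b) ≤ ENNReal.ofReal (BS x y + (2 + 2 * D / M)) := by
  obtain ⟨p, s⟩ := x
  obtain ⟨q, t0⟩ := y
  obtain ⟨hs, hsM⟩ := hx
  obtain ⟨ht, htM⟩ := hy
  simp only at hs hsM ht htM
  obtain ⟨α, hα0, hαd, hiso⟩ := hg p q
  set d : ℝ := dist p q with hd_def
  have hd0 : 0 ≤ d := dist_nonneg
  set m : ℝ := max s t0 with hm_def
  have hm0 : 0 < m := lt_max_of_lt_left hs
  have hmM : m ≤ M := max_le hsM htM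
  set h : ℝ := min M (d + m) with hh_def
  have hh0 : 0 < h := lt_min hM (by linarith)
  have hhM : h ≤ M := min_le_left _ _
  have hmh : m ≤ h := le_min hmM (by linarith)
  have hsh : s ≤ h := le_trans (le_max_left _ _) hmh
  have hth : t0 ≤ h := le_trans (le_max_right _ _) hmh
  set A : ℝ := Real.log h - Real.log s with hA_def
  set B : ℝ := 2 * d / h with hB_def
  set C : ℝ := Real.log h - Real.log t0 with hC_def
  have hA0 : 0 ≤ A := by have := Real.log_le_log hs hsh; linarith
  have hB0 : 0 ≤ B := by positivity
  have hC0 : 0 ≤ C := by have := Real.log_le_log ht hth; linarith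
  set c : ℝ → ℝ := fun r => d * min (max (r - 1) 0) 1 with hc_def
  set g : ℝ → ℝ := fun r =>
    min (Real.log s + r * A) (min (Real.log h) (Real.log t0 + (3 - r) * C)) with hg_def
  set γ : ℝ → Y × ℝ := fun r => (α (c r), Real.exp (g r)) with hγ_def
  set f : ℝ → ℝ := fun r =>
    A * min r 1 + B * min (max (r - 1) 0) 1 + C * min (max (r - 2) 0) 1 with hf_def
  -- segment evaluations
  have hcval : ∀ r, c r ∈ Icc (0:ℝ) d := by
    intro r
    constructor
    · apply mul_nonneg hd0 (le_min (le_max_right _ _) zero_le_one)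
    · calc d * min (max (r - 1) 0) 1 ≤ d * 1 := by
            apply mul_le_mul_of_nonneg_left (min_le_right _ _) hd0
      _ = d := mul_one d
  have hc1 : ∀ r ≤ (1:ℝ), c r = 0 := by
    intro r hr
    simp only [hc_def]
    rw [max_eq_right (by linarith), min_eq_left zero_le_one, mul_zero]
  have hc2 : ∀ r ∈ Icc (1:ℝ) 2, c r = d * (r - 1) := by
    intro r hr
    simp only [hc_def]
    rw [max_eq_left (by linarith [hr.1]), min_eq_left (by linarith [hr.2])]
  have hc3 : ∀ r, (2:ℝ) ≤ r → c r = d := by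
    intro r hr
    simp only [hc_def]
    rw [max_eq_left (by linarith), min_eq_right (by linarith), mul_one]
  have hg1 : ∀ r ∈ Icc (0:ℝ) 1, g r = Real.log s + r * A := by
    intro r hr
    simp only [hg_def]
    apply min_eq_left
    apply le_min
    · nlinarith [mul_nonneg (by linarith [hr.2] : (0:ℝ) ≤ 1 - r) hA0]
    · nlinarith [mul_nonneg (by linarith [hr.2] : (0:ℝ) ≤ 1 - r) hA0,
        mul_nonneg (by linarith [hr.2] : (0:ℝ) ≤ 2 - r) hC0]
  have hg2 : ∀ r ∈ Icc (1:ℝ) 2, g r = Real.log h := by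
    intro r hr
    simp only [hg_def]
    rw [min_eq_left (by nlinarith [mul_nonneg (by linarith [hr.2] : (0:ℝ) ≤ 2 - r) hC0] :
      Real.log h ≤ Real.log t0 + (3 - r) * C)]
    apply min_eq_right
    nlinarith [mul_nonneg (by linarith [hr.1] : (0:ℝ) ≤ r - 1) hA0]
  have hg3 : ∀ r ∈ Icc (2:ℝ) 3, g r = Real.log t0 + (3 - r) * C := by
    intro r hr
    simp only [hg_def]
    rw [min_eq_right (by nlinarith [mul_nonneg (by linarith [hr.1] : (0:ℝ) ≤ r - 2) hC0] :
      Real.log t0 + (3 - r) * C ≤ Real.log h)]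
    apply min_eq_right
    nlinarith [mul_nonneg (by linarith [hr.1] : (0:ℝ) ≤ r - 2) hC0,
      mul_nonneg (by linarith [hr.1] : (0:ℝ) ≤ r - 1) hA0]
  have hf1 : ∀ r ∈ Icc (0:ℝ) 1, f r = A * r := by
    intro r hr
    simp only [hf_def]
    rw [min_eq_left hr.2, max_eq_right (by linarith [hr.2] : r - 1 ≤ (0:ℝ)),
      max_eq_right (by linarith [hr.2] : r - 2 ≤ (0:ℝ)), min_eq_left zero_le_one]
    ring
  have hf2 : ∀ r ∈ Icc (1:ℝ) 2, f r = A + B * (r - 1) := by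
    intro r hr
    simp only [hf_def]
    rw [min_eq_right hr.1, max_eq_left (by linarith [hr.1] : (0:ℝ) ≤ r - 1),
      max_eq_right (by linarith [hr.2] : r - 2 ≤ (0:ℝ)),
      min_eq_left (by linarith [hr.2] : r - 1 ≤ (1:ℝ)), min_eq_left zero_le_one]
    ring
  have hf3 : ∀ r ∈ Icc (2:ℝ) 3, f r = A + B + C * (r - 2) := by
    intro r hr
    simp only [hf_def]
    rw [min_eq_right (by linarith [hr.1] : (1:ℝ) ≤ r), max_eq_left (by linarith [hr.1] : (0:ℝ) ≤ r - 1),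
      max_eq_left (by linarith [hr.1] : (0:ℝ) ≤ r - 2),
      min_eq_right (by linarith [hr.1] : (1:ℝ) ≤ r - 1),
      min_eq_left (by linarith [hr.2] : r - 2 ≤ (1:ℝ))]
    ring
  -- positivity of heights along γ
  have hpos : ∀ r, 0 < (γ r).2 := fun r => Real.exp_pos _
  -- segment bounds
  have seg1 : ∀ u ∈ Icc (0:ℝ) 1, ∀ v ∈ Icc (0:ℝ) 1, u ≤ v → BS (γ u) (γ v) ≤ f v - f u := by
    intro u hu v hv huv
    have : γ u = (p, Real.exp (g u)) := by
      simp only [hγ_def]; rw [hc1 u hu.2, hα0]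
    rw [this, show γ v = (p, Real.exp (g v)) by simp only [hγ_def]; rw [hc1 v hv.2, hα0]]
    rw [BS_same_base p (Real.exp_pos _) (Real.exp_pos _), Real.log_exp, Real.log_exp,
      hg1 u hu, hg1 v hv, hf1 u hu, hf1 v hv]
    rw [abs_of_nonpos (by nlinarith [mul_nonneg (sub_nonneg.2 huv) hA0])]
    ring_nf
    nlinarith [mul_nonneg (sub_nonneg.2 huv) hA0]
  have seg2 : ∀ u ∈ Icc (1:ℝ) 2, ∀ v ∈ Icc (1:ℝ) 2, u ≤ v → BS (γ u) (γ v) ≤ f v - f u := by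
    intro u hu v hv huv
    have hγu : γ u = (α (c u), h) := by
      simp only [hγ_def]; rw [hg2 u hu, Real.exp_log hh0]
    have hγv : γ v = (α (c v), h) := by
      simp only [hγ_def]; rw [hg2 v hv, Real.exp_log hh0]
    rw [hγu, hγv]
    calc BS (α (c u), h) (α (c v), h) ≤ 2 * (dist (α (c u)) (α (c v)) / h) :=
          BS_same_height _ _ hh0
      _ = 2 * (d * (v - u)) / h := by
          rw [hiso _ (hcval u) _ (hcval v), hc2 u hu, hc2 v hv,
            abs_of_nonpos (by nlinarith [sub_nonneg.2 huv] : d * (u - 1) - d * (v - 1) ≤ 0)]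
          ring
      _ ≤ f v - f u := by
          rw [hf2 u hu, hf2 v hv, hB_def]
          apply le_of_eq
          field_simp
          ring
  have seg3 : ∀ u ∈ Icc (2:ℝ) 3, ∀ v ∈ Icc (2:ℝ) 3, u ≤ v → BS (γ u) (γ v) ≤ f v - f u := by
    intro u hu v hv huv
    have : γ u = (q, Real.exp (g u)) := by
      simp only [hγ_def]; rw [hc3 u hu.1, hαd]
    rw [this, show γ v = (q, Real.exp (g v)) by simp only [hγ_def]; rw [hc3 v hv.1, hαd]]
    rw [BS_same_base q (Real.exp_pos _) (Real.exp_pos _), Real.log_exp, Real.log_exp,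
      hg3 u hu, hg3 v hv, hf3 u hu, hf3 v hv]
    rw [abs_of_nonneg (by nlinarith [mul_nonneg (sub_nonneg.2 huv) hC0])]
    ring_nf
    nlinarith [mul_nonneg (sub_nonneg.2 huv) hC0]
  -- gluing
  have h1m : (1:ℝ) ∈ Icc (0:ℝ) 1 := by norm_num
  have h1m' : (1:ℝ) ∈ Icc (1:ℝ) 2 := by norm_num
  have h2m : (2:ℝ) ∈ Icc (1:ℝ) 2 := by norm_num
  have h2m' : (2:ℝ) ∈ Icc (2:ℝ) 3 := by norm_num
  have key : ∀ u ∈ Icc (0:ℝ) 3, ∀ v ∈ Icc (0:ℝ) 3, u ≤ v → BS (γ u) (γ v) ≤ f v - f u := by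
    intro u hu v hv huv
    rcases le_total v 1 with hv1 | hv1
    · exact seg1 u ⟨hu.1, by linarith⟩ v ⟨by linarith [hu.1], hv1⟩ huv
    rcases le_total 2 u with hu2 | hu2
    · exact seg3 u ⟨hu2, hu.2⟩ v ⟨by linarith, hv.2⟩ huv
    rcases le_total u 1 with hu1 | hu1
    · rcases le_total v 2 with hv2 | hv2
      · calc BS (γ u) (γ v) ≤ BS (γ u) (γ 1) + BS (γ 1) (γ v) :=
              BS_triangle (hpos u) (hpos 1) (hpos v)
          _ ≤ (f 1 - f u) + (f v - f 1) := by
              gcongr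
              · exact seg1 u ⟨hu.1, hu1⟩ 1 h1m hu1
              · exact seg2 1 h1m' v ⟨hv1, hv2⟩ hv1
          _ = f v - f u := by ring
      · calc BS (γ u) (γ v) ≤ BS (γ u) (γ 1) + BS (γ 1) (γ v) :=
              BS_triangle (hpos u) (hpos 1) (hpos v)
          _ ≤ (f 1 - f u) + ((f 2 - f 1) + (f v - f 2)) := by
              gcongr
              · exact seg1 u ⟨hu.1, hu1⟩ 1 h1m hu1
              · calc BS (γ 1) (γ v) ≤ BS (γ 1) (γ 2) + BS (γ 2) (γ v) :=
                      BS_triangle (hpos 1) (hpos 2) (hpos v)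
                  _ ≤ (f 2 - f 1) + (f v - f 2) := by
                      gcongr
                      · exact seg2 1 h1m' 2 h2m one_le_two
                      · exact seg3 2 h2m' v ⟨hv2, hv.2⟩ hv2
          _ = f v - f u := by ring
    · rcases le_total v 2 with hv2 | hv2
      · exact seg2 u ⟨hu1, hu2⟩ v ⟨hv1, hv2⟩ huv
      · calc BS (γ u) (γ v) ≤ BS (γ u) (γ 2) + BS (γ 2) (γ v) :=
              BS_triangle (hpos u) (hpos 2) (hpos v)
          _ ≤ (f 2 - f u) + (f v - f 2) := by
              gcongr
              · exact seg2 u ⟨hu1, hu2⟩ 2 h2m hu2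
              · exact seg3 2 h2m' v ⟨hv2, hv.2⟩ hv2
          _ = f v - f u := by ring
  -- monotonicity of f
  have hfmono : Monotone f := by
    intro u v huv
    simp only [hf_def]
    exact add_le_add (add_le_add
      (mul_le_mul_of_nonneg_left (min_le_min huv le_rfl) hA0)
      (mul_le_mul_of_nonneg_left (min_le_min (max_le_max (by linarith) le_rfl) le_rfl) hB0))
      (mul_le_mul_of_nonneg_left (min_le_min (max_le_max (by linarith) le_rfl) le_rfl) hC0)
  -- continuity
  have hccont : Continuous c := by
    simp only [hc_def]
    exact continuous_const.mul (((continuous_id.sub continuous_const).max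
      continuous_const).min continuous_const)
  have hgcont : Continuous g := by
    simp only [hg_def]
    exact (continuous_const.add (continuous_id.mul continuous_const)).min
      (continuous_const.min (continuous_const.add
        ((continuous_const.sub continuous_id).mul continuous_const)))
  have hαlip : LipschitzOnWith 1 α (Icc 0 d) := by
    apply LipschitzOnWith.of_dist_le_mul
    intro a ha b hb
    rw [hiso a ha b hb, Real.dist_eq]
    simp
  have hγcont : ContinuousOn γ (Icc (0:ℝ) 3) := by
    simp only [hγ_def]
    apply ContinuousOn.prodMk
    · exact hαlip.continuousOn.comp hccont.continuousOn (fun r _ => hcval r)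
    · exact (Real.continuous_exp.comp hgcont).continuousOn
  -- endpoints
  have hend0 : γ 0 = (p, s) := by
    simp only [hγ_def]
    rw [hc1 0 zero_le_one, hα0, hg1 0 ⟨le_rfl, zero_le_one⟩]
    norm_num [Real.exp_log hs]
  have hend3 : γ 3 = (q, t0) := by
    simp only [hγ_def]
    rw [hc3 3 (by norm_num), hαd, hg3 3 ⟨by norm_num, le_rfl⟩]
    norm_num [Real.exp_log ht]
  -- membership in X_M
  have hmemXM : ∀ r ∈ Icc (0:ℝ) 3, inXM M (γ r) := by
    intro r _
    refine ⟨Real.exp_pos _, ?_⟩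
    have hgr : g r ≤ Real.log M := by
      calc g r ≤ Real.log h := le_trans (min_le_right _ _) (min_le_left _ _)
        _ ≤ Real.log M := Real.log_le_log hh0 hhM
    calc (γ r).2 = Real.exp (g r) := rfl
      _ ≤ Real.exp (Real.log M) := Real.exp_le_exp.2 hgr
      _ = M := Real.exp_log hM
  -- the total bound
  have hBSxy : BS (p, s) (q, t0) = 2 * Real.log (d + m) - (Real.log s + Real.log t0) := by
    unfold BS
    simp only
    rw [Real.log_div (by positivity) (ne_of_gt (Real.sqrt_pos.2 (mul_pos hs ht))),
      Real.log_sqrt (by positivity), Real.log_mul hs.ne' ht.ne']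
    ring
  have hD0 : 0 ≤ D := by
    have := hD p p
    rw [dist_self] at this
    exact this
  have main : A + B + C ≤ BS (p, s) (q, t0) + (2 + 2 * D / M) := by
    rw [hBSxy, hA_def, hB_def, hC_def]
    rcases le_total M (d + m) with hcase | hcase
    · have hhe : h = M := min_eq_left hcase
      rw [hhe]
      have h1 : Real.log M ≤ Real.log (d + m) := Real.log_le_log hM hcase
      have h2 : 2 * d / M ≤ 2 * D / M := by
        gcongr
        exact hD p q
      linarith
    · have hhe : h = d + m := min_eq_right hcase
      rw [hhe]
      have h1 : 2 * d / (d + m) ≤ 2 := by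
        rw [div_le_iff₀ (by linarith)]
        linarith
      have h2 : 0 ≤ 2 * D / M := div_nonneg (by linarith) hM.le
      linarith
  -- conclude
  refine ⟨0, 3, γ, by norm_num, hγcont, hend0, hend3, hmemXM, ?_⟩
  calc lengthOn (BS (Y := Y)) γ (Icc 0 3)
      ≤ ENNReal.ofReal (f 3 - f 0) :=
        lengthOn_le _ _ (by norm_num) f (hfmono.monotoneOn _) key
    _ = ENNReal.ofReal (A + B + C) := by
        rw [hf3 3 ⟨by norm_num, le_rfl⟩, hf1 0 ⟨le_rfl, zero_le_one⟩]
        norm_num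
    _ ≤ ENNReal.ofReal (BS (p, s) (q, t0) + (2 + 2 * D / M)) :=
        ENNReal.ofReal_le_ofReal main

lemma dLen_est {Y : Type*} [MetricSpace Y] (hg : GeodesicSpace Y) {M D : ℝ} (hM : 0 < M)
    (hD : ∀ p q : Y, dist p q ≤ D) {x y : Y × ℝ} (hx : inXM M x) (hy : inXM M y) :
    BS x y ≤ dLen M x y ∧ dLen M x y ≤ BS x y + (2 + 2 * D / M) := by
  set S : Set ENNReal := {L : ENNReal | ∃ (a b : ℝ) (γ : ℝ → Y × ℝ), a ≤ b ∧
      ContinuousOn γ (Icc a b) ∧ γ a = x ∧ γ b = y ∧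
      (∀ t ∈ Icc a b, inXM M (γ t)) ∧
      lengthOn (BS (Y := Y)) γ (Icc a b) = L} with hS_def
  obtain ⟨a, b, γ, hab, hcont, ha, hb, hmem, hlen⟩ := upper_path hg hM hD x y hx hy
  have hmemS : lengthOn (BS (Y := Y)) γ (Icc a b) ∈ S :=
    ⟨a, b, γ, hab, hcont, ha, hb, hmem, rfl⟩
  have hub : sInf S ≤ ENNReal.ofReal (BS x y + (2 + 2 * D / M)) :=
    le_trans (sInf_le hmemS) hlen
  have hlb : ENNReal.ofReal (BS x y) ≤ sInf S := by
    apply le_sInf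
    rintro L ⟨a', b', γ', hab', hcont', ha', hb', hmem', rfl⟩
    have := lengthOn_ge (BS (Y := Y)) γ' hab'
    rwa [ha', hb'] at this
  have hfin : sInf S ≠ ⊤ := ne_top_of_le_ne_top ENNReal.ofReal_ne_top hub
  have hBS0 : 0 ≤ BS x y := BS_nonneg hx.1 hy.1
  have hD0 : 0 ≤ D := by
    have := hD x.1 x.1
    rwa [dist_self] at this
  constructor
  · have h1 := ENNReal.toReal_mono hfin hlb
    rwa [ENNReal.toReal_ofReal hBS0] at h1
  · have h2 := ENNReal.toReal_mono ENNReal.ofReal_ne_top hub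
    rwa [ENNReal.toReal_ofReal (by positivity)] at h2

lemma dLen_BS_bound {Y : Type*} [MetricSpace Y] [CompactSpace Y] (hg : GeodesicSpace Y)
    {M : ℝ} (hM : 0 < M) : ∃ C : ℝ, 0 ≤ C ∧ ∀ x y : Y × ℝ, inXM M x → inXM M y →
      |dLen M x y - BS x y| ≤ C := by
  obtain ⟨D, hD⟩ := Metric.isBounded_iff.1 (isCompact_univ (X := Y)).isBounded
  have hD' : ∀ p q : Y, dist p q ≤ max D 0 :=
    fun p q => le_trans (hD (mem_univ p) (mem_univ q)) (le_max_left _ _)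
  refine ⟨2 + 2 * max D 0 / M, by positivity, fun x y hx hy => ?_⟩
  obtain ⟨h1, h2⟩ := dLen_est hg hM hD' hx hy
  rw [abs_le]
  constructor <;> linarith [div_nonneg (by positivity : (0:ℝ) ≤ 2 * max D 0) hM.le]

lemma BS_eq {Y : Type*} [MetricSpace Y] (x y : Y × ℝ) (hx : 0 < x.2) (hy : 0 < y.2) :
    BS x y = 2 * (Real.log (dist x.1 y.1 + max x.2 y.2) - Real.log (Real.sqrt (x.2 * y.2))) := by
  unfold BS
  rw [Real.log_div (by positivity) (ne_of_gt (Real.sqrt_pos.2 (mul_pos hx hy)))]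

lemma BS_diag {Y : Type*} [MetricSpace Y] (p q : Y) {m : ℝ} (hm : 0 < m) :
    BS (p, m) (q, m) = 2 * (Real.log (dist p q + m) - Real.log m) := by
  rw [BS_eq (p, m) (q, m) hm hm]
  simp only [max_self]
  rw [Real.sqrt_mul_self hm.le]

lemma exp_bound_of_log_diff {a b c : ℝ} (ha : 0 < a) (hb : 0 < b)
    (h : Real.log a - Real.log b ≤ c) : a ≤ Real.exp c * b := by
  calc a = Real.exp (Real.log a) := (Real.exp_log ha).symm
    _ ≤ Real.exp (c + Real.log b) := Real.exp_le_exp.2 (by linarith)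
    _ = Real.exp c * b := by rw [Real.exp_add, Real.exp_log hb]

lemma log_diff_le_of_le {a b K : ℝ} (hb : 0 < b) (hK : 0 < K) (h : a ≤ K * b) (ha : 0 < a) :
    Real.log a - Real.log b ≤ Real.log K := by
  have h1 : Real.log a ≤ Real.log (K * b) := Real.log_le_log ha h
  rw [Real.log_mul hK.ne' hb.ne'] at h1
  linarith

lemma abs_chain (a b c d : ℝ) : |a - d| ≤ |a - b| + |b - c| + |c - d| :=
  le_trans (abs_sub_le a c d) (add_le_add (abs_sub_le a b c) le_rfl)

lemma aux_forward {M c' d₁ d₂ : ℝ} (hM : 0 < M) (hc' : 0 ≤ c') (hd₁ : 0 ≤ d₁) (hd₂ : 0 ≤ d₂)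
    (h : ∀ m, 0 < m → m ≤ M →
      |2 * (Real.log (d₁ + m) - Real.log m) - 2 * (Real.log (d₂ + m) - Real.log m)| ≤ c') :
    d₁ ≤ Real.exp (c' / 2) * d₂ := by
  set K := Real.exp (c' / 2) with hK_def
  have hK1 : 1 ≤ K := Real.one_le_exp (by linarith)
  have hK0 : 0 < K := lt_of_lt_of_le one_pos hK1
  apply le_of_forall_pos_le_add
  intro ε hε
  set m := min (ε / K) M with hm_def
  have hm0 : 0 < m := lt_min (div_pos hε hK0) hM
  have hmM : m ≤ M := min_le_right _ _
  have h1 := (abs_le.1 (h m hm0 hmM)).2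
  have h2 : d₁ + m ≤ K * (d₂ + m) :=
    exp_bound_of_log_diff (by linarith) (by linarith) (by linarith)
  have h3 : K * m ≤ ε := by
    calc K * m ≤ K * (ε / K) := mul_le_mul_of_nonneg_left (min_le_left _ _) hK0.le
      _ = ε := by field_simp
  nlinarith [h2, h3, hm0, hK1]

lemma aux_backward {K d₁ d₂ m sq : ℝ} (hK1 : 1 ≤ K) (hd₁ : 0 ≤ d₁) (hd₂ : 0 ≤ d₂) (hm : 0 < m)
    (h12 : d₁ ≤ K * d₂) (h21 : d₂ ≤ K * d₁) :
    |2 * (Real.log (d₁ + m) - Real.log sq) - 2 * (Real.log (d₂ + m) - Real.log sq)| ≤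
      2 * Real.log K := by
  have hK0 : 0 < K := lt_of_lt_of_le one_pos hK1
  have e1 : d₁ + m ≤ K * (d₂ + m) := by nlinarith
  have e2 : d₂ + m ≤ K * (d₁ + m) := by nlinarith
  have l1 := log_diff_le_of_le (by linarith) hK0 e1 (by linarith)
  have l2 := log_diff_le_of_le (by linarith) hK0 e2 (by linarith)
  rw [abs_le]
  constructor <;> linarith


/-- for two compact geodesic metrics on `Y`, the induced length
metrics on `X_M = Y × (0, M]` are rough-isometric iff the two metrics on `Y`
are bi-Lipschitzly equivalent. -/
theorem stmt10 {Y : Type*} (m₁ m₂ : MetricSpace Y)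
    (hc₁ : @CompactSpace Y m₁.toUniformSpace.toTopologicalSpace)
    (hc₂ : @CompactSpace Y m₂.toUniformSpace.toTopologicalSpace)
    (hg₁ : @GeodesicSpace Y m₁) (hg₂ : @GeodesicSpace Y m₂)
    {M : ℝ} (hM : 0 < M) :
    (∃ c : ℝ, 0 ≤ c ∧ ∀ x y : Y × ℝ, inXM M x → inXM M y →
        |@dLen Y m₁ M x y - @dLen Y m₂ M x y| ≤ c) ↔
      (∃ K : ℝ, 1 ≤ K ∧ ∀ p q : Y,
        (1 / K) * @dist Y m₁.toDist p q ≤ @dist Y m₂.toDist p q ∧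
          @dist Y m₂.toDist p q ≤ K * @dist Y m₁.toDist p q) := by
  obtain ⟨C₁, hC₁0, hC₁⟩ := @dLen_BS_bound Y m₁ hc₁ hg₁ M hM
  obtain ⟨C₂, hC₂0, hC₂⟩ := @dLen_BS_bound Y m₂ hc₂ hg₂ M hM
  constructor
  · rintro ⟨c, hc0, hc⟩
    have hc'0 : 0 ≤ c + C₁ + C₂ := by linarith
    have hBSdiff : ∀ x y : Y × ℝ, inXM M x → inXM M y →
        |@BS Y m₁ x y - @BS Y m₂ x y| ≤ c + C₁ + C₂ := by
      intro x y hx hy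
      have h1 := hC₁ x y hx hy
      have h2 := hC₂ x y hx hy
      have h3 := hc x y hx hy
      have h4 := abs_chain (@BS Y m₁ x y) (@dLen Y m₁ M x y) (@dLen Y m₂ M x y) (@BS Y m₂ x y)
      have e1 := abs_sub_comm (@BS Y m₁ x y) (@dLen Y m₁ M x y)
      have e2 := abs_sub_comm (@dLen Y m₂ M x y) (@BS Y m₂ x y)
      linarith
    refine ⟨Real.exp ((c + C₁ + C₂) / 2), Real.one_le_exp (by linarith), fun p q => ?_⟩
    have hBS' : ∀ m, 0 < m → m ≤ M →
        |2 * (Real.log (@dist Y m₁.toDist p q + m) - Real.log m) -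
          2 * (Real.log (@dist Y m₂.toDist p q + m) - Real.log m)| ≤ c + C₁ + C₂ := by
      intro m hm hmM
      have := hBSdiff (p, m) (q, m) ⟨hm, hmM⟩ ⟨hm, hmM⟩
      rwa [@BS_diag Y m₁ p q m hm, @BS_diag Y m₂ p q m hm] at this
    have key₁ : @dist Y m₁.toDist p q ≤ Real.exp ((c + C₁ + C₂) / 2) * @dist Y m₂.toDist p q :=
      aux_forward hM hc'0 (@dist_nonneg Y m₁.toPseudoMetricSpace p q)
        (@dist_nonneg Y m₂.toPseudoMetricSpace p q) hBS'
    have key₂ : @dist Y m₂.toDist p q ≤ Real.exp ((c + C₁ + C₂) / 2) * @dist Y m₁.toDist p q :=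
      aux_forward hM hc'0 (@dist_nonneg Y m₂.toPseudoMetricSpace p q)
        (@dist_nonneg Y m₁.toPseudoMetricSpace p q)
        (fun m hm hmM => by rw [abs_sub_comm]; exact hBS' m hm hmM)
    have hK0 : (0:ℝ) < Real.exp ((c + C₁ + C₂) / 2) := Real.exp_pos _
    constructor
    · have h := mul_le_mul_of_nonneg_left key₁ (le_of_lt (one_div_pos.2 hK0))
      calc (1 / Real.exp ((c + C₁ + C₂) / 2)) * @dist Y m₁.toDist p q
          ≤ (1 / Real.exp ((c + C₁ + C₂) / 2)) *
            (Real.exp ((c + C₁ + C₂) / 2) * @dist Y m₂.toDist p q) := h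
        _ = @dist Y m₂.toDist p q := by field_simp
    · exact key₂
  · rintro ⟨K, hK1, hK⟩
    have hK0 : (0:ℝ) < K := lt_of_lt_of_le one_pos hK1
    refine ⟨C₁ + C₂ + 2 * Real.log K, by linarith [Real.log_nonneg hK1], fun x y hx hy => ?_⟩
    have h1 := hC₁ x y hx hy
    have h2 := hC₂ x y hx hy
    have hd12 : @dist Y m₁.toDist x.1 y.1 ≤ K * @dist Y m₂.toDist x.1 y.1 := by
      calc @dist Y m₁.toDist x.1 y.1 = K * ((1 / K) * @dist Y m₁.toDist x.1 y.1) := by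
            field_simp
        _ ≤ K * @dist Y m₂.toDist x.1 y.1 :=
            mul_le_mul_of_nonneg_left (hK x.1 y.1).1 hK0.le
    have hd21 : @dist Y m₂.toDist x.1 y.1 ≤ K * @dist Y m₁.toDist x.1 y.1 := (hK x.1 y.1).2
    have hBSd : |@BS Y m₁ x y - @BS Y m₂ x y| ≤ 2 * Real.log K := by
      rw [@BS_eq Y m₁ x y hx.1 hy.1, @BS_eq Y m₂ x y hx.1 hy.1]
      exact aux_backward hK1 (@dist_nonneg Y m₁.toPseudoMetricSpace x.1 y.1)
        (@dist_nonneg Y m₂.toPseudoMetricSpace x.1 y.1) (lt_max_of_lt_left hx.1) hd12 hd21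
    have h4 := abs_chain (@dLen Y m₁ M x y) (@BS Y m₁ x y) (@BS Y m₂ x y) (@dLen Y m₂ M x y)
    have e2 := abs_sub_comm (@BS Y m₂ x y) (@dLen Y m₂ M x y)
    linarith
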